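/- If T is a finite tree of order n ≥ 4 with exactly 3 leaves, then pd(T) = 3. -/

import Mathlib

open SimpleGraph

variable {V : Type*}

/-- Distance from a vertex to a set of vertices: `min_{u ∈ P} d(v,u)`. -/
noncomputable def distSet (G : SimpleGraph V) (v : V) (P : Set V) : ℕ :=
  sInf ((G.dist v) '' P)

/-- An ordered partition of `V` into `t` (nonempty) classes, encoded by a surjective
map `c : V → Fin t`, is resolving if distinct vertices have distinct partition
representations, i.e. distinct vectors of distances to the classes. -/
def IsResolvingPartition (G : SimpleGraph V) {t : ℕ} (c : V → Fin t) : Prop :=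
  Function.Surjective c ∧
    ∀ u v : V, (∀ i : Fin t, distSet G u {x | c x = i} = distSet G v {x | c x = i}) → u = v

/-- The partition dimension: the least `t` admitting a resolving partition into `t` classes. -/
noncomputable def partitionDim (G : SimpleGraph V) : ℕ :=
  sInf {t : ℕ | ∃ c : V → Fin t, IsResolvingPartition G c}

/-- A set `S` is a resolving set if distinct vertices have distinct vectors of
distances to the elements of `S`. -/
def IsResolvingSet (G : SimpleGraph V) (S : Set V) : Prop :=
  ∀ u v : V, (∀ w ∈ S, G.dist u w = G.dist v w) → u = v

/-- The metric dimension: the least cardinality of a resolving set. -/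
noncomputable def metricDim (G : SimpleGraph V) : ℕ :=
  sInf {k : ℕ | ∃ S : Set V, S.ncard = k ∧ IsResolvingSet G S}

/-- A leaf is a vertex of degree one. -/
def IsLeaf (G : SimpleGraph V) (v : V) : Prop := (G.neighborSet v).ncard = 1

/-- A major vertex is a vertex of degree at least three. -/
def IsMajor (G : SimpleGraph V) (v : V) : Prop := 3 ≤ (G.neighborSet v).ncard

/-- A path graph: a tree in which every vertex has degree at most two. -/
def IsPathGraph (G : SimpleGraph V) : Prop :=
  G.IsTree ∧ ∀ v : V, (G.neighborSet v).ncard ≤ 2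

/-- `u` is a terminal vertex of the major vertex `v` if `u` is a leaf and
`d(u,v) < d(u,w)` for every other major vertex `w`. -/
def IsTerminalOf (G : SimpleGraph V) (u v : V) : Prop :=
  IsLeaf G u ∧ IsMajor G v ∧ ∀ w : V, IsMajor G w → w ≠ v → G.dist u v < G.dist u w

/-- The terminal degree of a vertex: its number of terminal vertices. -/
noncomputable def terminalDegree (G : SimpleGraph V) (v : V) : ℕ :=
  {u | IsTerminalOf G u v}.ncard

/-- An exterior major vertex: a major vertex with positive terminal degree. -/
def IsExteriorMajor (G : SimpleGraph V) (v : V) : Prop :=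
  IsMajor G v ∧ 0 < terminalDegree G v

/-- `n₁(G)`: the number of leaves. -/
noncomputable def numLeaves (G : SimpleGraph V) : ℕ := {v | IsLeaf G v}.ncard

/-- `ex(G)`: the number of exterior major vertices. -/
noncomputable def numExteriorMajor (G : SimpleGraph V) : ℕ := {v | IsExteriorMajor G v}.ncard

/-- A support vertex: a vertex adjacent to a leaf. -/
def IsSupport (G : SimpleGraph V) (v : V) : Prop := ∃ u, G.Adj v u ∧ IsLeaf G u

/-- `ξ(G)`: the number of support vertices. -/
noncomputable def numSupport (G : SimpleGraph V) : ℕ := {v | IsSupport G v}.ncard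

/-- `θ(G)`: the maximum number of leaves adjacent to a single support vertex. -/
noncomputable def maxLeavesAtSupport (G : SimpleGraph V) : ℕ :=
  sSup {n : ℕ | ∃ v, IsSupport G v ∧ n = {u | G.Adj v u ∧ IsLeaf G u}.ncard}

section AuxTree
set_option linter.unusedSectionVars false
variable {V : Type*} [DecidableEq V] {G : SimpleGraph V}


lemma geodesic_split (hc : G.Connected) {a b c : V} (p : G.Walk a b)
    (hp : p.length = G.dist a b) (hmem : c ∈ p.support) :
    G.dist a c + G.dist c b = G.dist a b ∧
      (p.takeUntil c hmem).length = G.dist a c ∧ (p.dropUntil c hmem).length = G.dist c b := by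
  have h1 : G.dist a c ≤ (p.takeUntil c hmem).length := SimpleGraph.dist_le _
  have h2 : G.dist c b ≤ (p.dropUntil c hmem).length := SimpleGraph.dist_le _
  have hlen : (p.takeUntil c hmem).length + (p.dropUntil c hmem).length = p.length := by
    rw [← SimpleGraph.Walk.length_append, SimpleGraph.Walk.take_spec]
  have htri : G.dist a b ≤ G.dist a c + G.dist c b := hc.dist_triangle
  omega

lemma isPath_of_length_eq_dist (hc : G.Connected) {a b : V} (p : G.Walk a b)
    (hp : p.length = G.dist a b) : p.IsPath := by
  induction p with
  | nil => exact SimpleGraph.Walk.IsPath.nil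
  | @cons u x b h q ih =>
    rw [SimpleGraph.Walk.length_cons] at hp
    have hxb : G.dist x b ≤ q.length := SimpleGraph.dist_le _
    have h1 : G.dist u b ≤ 1 + G.dist x b := by
      have := hc.dist_triangle (u := u) (v := x) (w := b)
      have hux : G.dist u x ≤ 1 := by
        simpa using SimpleGraph.dist_le (SimpleGraph.Walk.cons h SimpleGraph.Walk.nil)
      omega
    have hq : q.length = G.dist x b := by omega
    have hqp := ih hq
    rw [SimpleGraph.Walk.cons_isPath_iff]
    refine ⟨hqp, fun hmem => ?_⟩
    have := (geodesic_split hc q hq hmem).1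
    omega

lemma dist_adj_le (h : G.Adj a b) : G.dist a b ≤ 1 := by
  simpa using SimpleGraph.dist_le (SimpleGraph.Walk.cons h SimpleGraph.Walk.nil)

/-- In a tree, adjacent vertices have different distances to any vertex. -/
lemma adj_dist_ne (hT : G.IsTree) {a b : V} (h : G.Adj a b) (v : V) :
    G.dist a v ≠ G.dist b v := by
  intro he
  have hc := hT.isConnected
  obtain ⟨q, hq⟩ := hc.exists_walk_length_eq_dist b v
  have hqp : q.IsPath := isPath_of_length_eq_dist hc q hq
  by_cases hmem : a ∈ q.support
  · have hsplit := (geodesic_split hc q hq hmem).1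
    have hba : G.dist b a ≠ 0 := by
      intro e
      exact h.ne ((hc.dist_eq_zero_iff).mp e).symm
    omega
  · have hcons : (SimpleGraph.Walk.cons h q).IsPath := by
      rw [SimpleGraph.Walk.cons_isPath_iff]; exact ⟨hqp, hmem⟩
    obtain ⟨p, hp⟩ := hc.exists_walk_length_eq_dist a v
    have hpp : p.IsPath := isPath_of_length_eq_dist hc p hp
    obtain ⟨r, -, hun⟩ := hT.existsUnique_path a v
    have e1 : SimpleGraph.Walk.cons h q = p := (hun _ hcons).trans (hun p hpp).symm
    have : (SimpleGraph.Walk.cons h q).length = p.length := by rw [e1]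
    rw [SimpleGraph.Walk.length_cons, hq, hp] at this
    omega

lemma adj_dist_cases (hT : G.IsTree) {a b : V} (h : G.Adj a b) (v : V) :
    G.dist a v = G.dist b v + 1 ∨ G.dist b v = G.dist a v + 1 := by
  have hc := hT.isConnected
  have h1 : G.dist a v ≤ G.dist a b + G.dist b v := hc.dist_triangle
  have h2 : G.dist b v ≤ G.dist b a + G.dist a v := hc.dist_triangle
  have h3 := dist_adj_le h
  have h4 := dist_adj_le h.symm
  have h5 := adj_dist_ne hT h v
  omega

lemma exists_closer (hc : G.Connected) {w v : V} (hne : w ≠ v) :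
    ∃ s, G.Adj w s ∧ G.dist s v + 1 = G.dist w v := by
  obtain ⟨p, hp⟩ := hc.exists_walk_length_eq_dist w v
  have hpos : 0 < G.dist w v := hc.pos_dist_of_ne hne
  cases p with
  | nil => simp at hp; simp [SimpleGraph.dist_self] at hpos
  | @cons _ s _ h q =>
    refine ⟨s, h, ?_⟩
    have h1 : G.dist s v ≤ q.length := SimpleGraph.dist_le _
    have h2 : G.dist w v ≤ G.dist w s + G.dist s v := hc.dist_triangle
    have h3 := dist_adj_le h
    rw [SimpleGraph.Walk.length_cons] at hp
    omega

/-- In a tree, the neighbour strictly closer to `v` is unique. -/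
lemma closer_unique (hT : G.IsTree) {w v s₁ s₂ : V} (h₁ : G.Adj w s₁) (h₂ : G.Adj w s₂)
    (hd₁ : G.dist s₁ v + 1 = G.dist w v) (hd₂ : G.dist s₂ v + 1 = G.dist w v) : s₁ = s₂ := by
  have hc := hT.isConnected
  obtain ⟨q₁, hq₁⟩ := hc.exists_walk_length_eq_dist s₁ v
  obtain ⟨q₂, hq₂⟩ := hc.exists_walk_length_eq_dist s₂ v
  have key : ∀ (s : V) (h : G.Adj w s) (q : G.Walk s v), q.length = G.dist s v →
      G.dist s v + 1 = G.dist w v → (SimpleGraph.Walk.cons h q).IsPath := by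
    intro s h q hq hd
    rw [SimpleGraph.Walk.cons_isPath_iff]
    refine ⟨isPath_of_length_eq_dist hc q hq, fun hmem => ?_⟩
    have hsplit := (geodesic_split hc q hq hmem).1
    have hsw : G.dist s w ≠ 0 := by
      intro e; exact h.ne ((hc.dist_eq_zero_iff).mp e).symm
    omega
  have hp₁ := key s₁ h₁ q₁ hq₁ hd₁
  have hp₂ := key s₂ h₂ q₂ hq₂ hd₂
  obtain ⟨r, -, hun⟩ := hT.existsUnique_path w v
  have e : SimpleGraph.Walk.cons h₁ q₁ = SimpleGraph.Walk.cons h₂ q₂ :=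
    (hun _ hp₁).trans (hun _ hp₂).symm
  have := congrArg SimpleGraph.Walk.support e
  rw [SimpleGraph.Walk.support_cons, SimpleGraph.Walk.support_cons] at this
  have h1 := SimpleGraph.Walk.support_eq_cons q₁
  have h2 := SimpleGraph.Walk.support_eq_cons q₂
  rw [h1, h2] at this
  simp only [List.cons.injEq] at this
  exact this.2.1

/-- `v` lies in the branch of `s` at `w`. -/
def Br (G : SimpleGraph V) (w v s : V) : Prop :=
  G.Adj w s ∧ G.dist s v + 1 = G.dist w v

lemma br_exists (hc : G.Connected) {w v : V} (hne : v ≠ w) : ∃ s, Br G w v s := by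
  obtain ⟨s, hs, hd⟩ := exists_closer hc (Ne.symm hne)
  exact ⟨s, hs, hd⟩

lemma br_unique (hT : G.IsTree) {w v s₁ s₂ : V} (h₁ : Br G w v s₁) (h₂ : Br G w v s₂) :
    s₁ = s₂ := closer_unique hT h₁.1 h₂.1 h₁.2 h₂.2

lemma br_step_up (hT : G.IsTree) {w a b s : V} (h : G.Adj a b)
    (hab : G.dist w b = G.dist w a + 1) (hs : Br G w a s) : Br G w b s := by
  have hc := hT.isConnected
  obtain ⟨hadj, hd⟩ := hs
  refine ⟨hadj, ?_⟩
  have h1 : G.dist s b ≤ G.dist s a + G.dist a b := hc.dist_triangle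
  have h2 : G.dist w b ≤ G.dist w s + G.dist s b := hc.dist_triangle
  have h3 := dist_adj_le h
  have h4 := dist_adj_le hadj
  omega

lemma br_step (hT : G.IsTree) {w a b s s' : V} (h : G.Adj a b)
    (hs : Br G w a s) (hs' : Br G w b s') : s = s' := by
  rcases adj_dist_cases hT h w with hd | hd
  · rw [SimpleGraph.dist_comm, SimpleGraph.dist_comm (u := b)] at hd
    exact br_unique hT (br_step_up hT h.symm hd hs') hs |>.symm
  · rw [SimpleGraph.dist_comm, SimpleGraph.dist_comm (u := a)] at hd
    exact br_unique hT (br_step_up hT h hd hs) hs'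

lemma br_walk' (hT : G.IsTree) {w b s' : V} {a : V} (p : G.Walk a b)
    (hw : ∀ x ∈ p.support, x ≠ w) (hs' : Br G w b s') : ∀ s, Br G w a s → s = s' := by
  induction p with
  | nil => exact fun s hs => br_unique hT hs hs'
  | @cons u y z h q ih =>
    intro s hs
    have hy : y ≠ w := hw y (by simp)
    obtain ⟨s'', hs''⟩ := br_exists hT.isConnected hy
    have h1 : s = s'' := br_step hT h hs hs''
    exact h1.trans (ih (fun x hx => hw x (by simp [hx])) hs' s'' hs'')

lemma br_walk (hT : G.IsTree) {w a b s s' : V} (p : G.Walk a b)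
    (hw : ∀ x ∈ p.support, x ≠ w) (hs : Br G w a s) (hs' : Br G w b s') : s = s' :=
  br_walk' hT p hw hs' s hs

/-- C1: vertices in different branches have distance through `w`. -/
lemma br_ne_dist (hT : G.IsTree) {w u v s s' : V} (hs : Br G w u s) (hs' : Br G w v s')
    (hss : s ≠ s') : G.dist u v = G.dist u w + G.dist w v := by
  have hc := hT.isConnected
  by_contra hne
  obtain ⟨p, hp⟩ := hc.exists_walk_length_eq_dist u v
  by_cases hmem : w ∈ p.support
  · have := (geodesic_split hc p hp hmem).1
    omega
  · exact hss (br_walk hT p (fun x hx hxw => hmem (by rwa [hxw] at hx)) hs hs')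

/-- C2: two vertices between `w` and `z` at the same distance from `w` are equal. -/
lemma collinear_eq (hT : G.IsTree) {w z u v : V}
    (hu : G.dist w u + G.dist u z = G.dist w z) (hv : G.dist w v + G.dist v z = G.dist w z)
    (huv : G.dist w u = G.dist w v) : u = v := by
  have hc := hT.isConnected
  obtain ⟨p₁, hp₁⟩ := hc.exists_walk_length_eq_dist w u
  obtain ⟨p₂, hp₂⟩ := hc.exists_walk_length_eq_dist u z
  obtain ⟨r₁, hr₁⟩ := hc.exists_walk_length_eq_dist w v
  obtain ⟨r₂, hr₂⟩ := hc.exists_walk_length_eq_dist v z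
  have hq : (p₁.append p₂).length = G.dist w z := by
    rw [SimpleGraph.Walk.length_append]; omega
  have hr : (r₁.append r₂).length = G.dist w z := by
    rw [SimpleGraph.Walk.length_append]; omega
  have hqp := isPath_of_length_eq_dist hc _ hq
  have hrp := isPath_of_length_eq_dist hc _ hr
  obtain ⟨t, -, hun⟩ := hT.existsUnique_path w z
  have e : p₁.append p₂ = r₁.append r₂ := (hun _ hqp).trans (hun _ hrp).symm
  have hvmem : v ∈ (p₁.append p₂).support := by
    rw [e, SimpleGraph.Walk.mem_support_append_iff]
    exact Or.inl (SimpleGraph.Walk.end_mem_support r₁)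
  rw [SimpleGraph.Walk.mem_support_append_iff] at hvmem
  rcases hvmem with hm | hm
  · have := (geodesic_split hc p₁ hp₁ hm).1
    have : G.dist u v = 0 := by
      rw [SimpleGraph.dist_comm]
      have htri : G.dist w u ≤ G.dist w v + G.dist v u := hc.dist_triangle
      omega
    exact ((hc.dist_eq_zero_iff).mp this)
  · have := (geodesic_split hc p₂ hp₂ hm).1
    have : G.dist u v = 0 := by
      have htri : G.dist w z ≤ G.dist w v + G.dist v z := hc.dist_triangle
      omega
    exact ((hc.dist_eq_zero_iff).mp this)

end AuxTree

section Aux2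
set_option linter.unusedSectionVars false
variable {V : Type*} [DecidableEq V] {G : SimpleGraph V}

lemma ncard_neighborSet_eq_degree [Fintype V] [DecidableRel G.Adj] (v : V) :
    (G.neighborSet v).ncard = G.degree v := by
  rw [← SimpleGraph.card_neighborSet_eq_degree, Set.ncard_eq_toFinset_card', Set.toFinset_card]

lemma exists_major_of_three_leaves [Fintype V]
    (hT : G.IsTree) (hV : 4 ≤ Fintype.card V) (hl : numLeaves G = 3) :
    ∃ w, 3 ≤ (G.neighborSet w).ncard := by
  classical
  by_contra hno
  push_neg at hno
  have hdeg : ∀ v, G.degree v ≤ 2 := by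
    intro v
    have := hno v
    rw [ncard_neighborSet_eq_degree] at this
    omega
  have hdpos : ∀ v, 1 ≤ G.degree v := by
    intro v
    rw [Nat.one_le_iff_ne_zero, Ne, ← Nat.le_zero, not_le, SimpleGraph.degree_pos_iff_exists_adj]
    obtain ⟨a, b, hab⟩ := Fintype.exists_pair_of_one_lt_card (by omega : 1 < Fintype.card V)
    have hne : v ≠ a ∨ v ≠ b := by
      by_contra h; push_neg at h; exact hab (h.1.symm.trans h.2)
    have key : ∀ u : V, v ≠ u → ∃ t, G.Adj v t := by
      intro u hu
      obtain ⟨p⟩ := hT.isConnected v u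
      cases p with
      | nil => exact absurd rfl hu
      | cons h q => exact ⟨_, h⟩
    rcases hne with h | h
    · exact key a h
    · exact key b h
  have hLcard : (Finset.univ.filter (fun v => G.degree v = 1)).card = 3 := by
    have : {v | IsLeaf G v} = {v | G.degree v = 1} := by
      ext v; simp [IsLeaf, ncard_neighborSet_eq_degree]
    rw [numLeaves, this, Set.ncard_eq_toFinset_card', Set.toFinset_setOf] at hl
    exact hl
  have hsum : ∑ v, G.degree v = 2 * G.edgeFinset.card :=
    SimpleGraph.sum_degrees_eq_twice_card_edges G
  have hE : G.edgeFinset.card + 1 = Fintype.card V := hT.card_edgeFinset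
  have hsplit : ∑ v ∈ Finset.univ.filter (fun v => G.degree v = 1), G.degree v +
      ∑ v ∈ Finset.univ.filter (fun v => ¬G.degree v = 1), G.degree v = ∑ v, G.degree v :=
    Finset.sum_filter_add_sum_filter_not Finset.univ (fun v => G.degree v = 1) (fun v => G.degree v)
  have h1 : ∑ v ∈ Finset.univ.filter (fun v => G.degree v = 1), G.degree v = 3 := by
    rw [Finset.sum_congr rfl (fun x hx => (Finset.mem_filter.mp hx).2)]
    simp [hLcard]
  have h2 : ∑ v ∈ Finset.univ.filter (fun v => ¬G.degree v = 1), G.degree v ≤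
      2 * (Finset.univ.filter (fun v => ¬G.degree v = 1)).card := by
    rw [mul_comm]
    simpa using Finset.sum_le_card_nsmul _ _ 2 (fun x _ => hdeg x)
  have hcardsplit := Finset.card_filter_add_card_filter_not
    (s := (Finset.univ : Finset V)) (p := fun v => G.degree v = 1)
  simp only [Finset.card_univ] at hcardsplit
  omega

/-- From any non-central vertex, one can walk away from `w` to reach a leaf. -/
lemma exists_leaf_on [Fintype V] (hT : G.IsTree) {w : V} (hw3 : 3 ≤ (G.neighborSet w).ncard)
    {v : V} (hv : v ≠ w) :
    ∃ l, IsLeaf G l ∧ G.dist w v + G.dist v l = G.dist w l := by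
  classical
  have hc := hT.isConnected
  set A : Finset V := Finset.univ.filter (fun u => G.dist w v + G.dist v u = G.dist w u) with hA
  have hvA : v ∈ A := by simp [hA]
  obtain ⟨u₀, hu₀A, hmax⟩ := Finset.exists_max_image A (fun u => G.dist w u) ⟨v, hvA⟩
  have hu₀ : G.dist w v + G.dist v u₀ = G.dist w u₀ := by
    simpa [hA] using hu₀A
  have hwv : 1 ≤ G.dist w v := hc.pos_dist_of_ne (Ne.symm hv)
  have hu₀w : u₀ ≠ w := by
    intro e
    rw [e, SimpleGraph.dist_self] at hu₀
    omega
  obtain ⟨s₀, hs₀adj, hs₀d⟩ := exists_closer hc hu₀w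
  have hnb : G.neighborSet u₀ = {s₀} := by
    ext t
    simp only [SimpleGraph.mem_neighborSet, Set.mem_singleton_iff]
    constructor
    · intro ht
      rcases adj_dist_cases hT ht w with hd | hd
      · exact closer_unique hT ht hs₀adj (by omega) hs₀d
      · exfalso
        have h1 : G.dist v t ≤ G.dist v u₀ + 1 := by
          have h1a : G.dist v t ≤ G.dist v u₀ + G.dist u₀ t := hc.dist_triangle
          have h1b := dist_adj_le ht
          omega
        have hcm1 : G.dist t w = G.dist w t := SimpleGraph.dist_comm
        have hcm2 : G.dist u₀ w = G.dist w u₀ := SimpleGraph.dist_comm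
        have hwt : G.dist w t = G.dist w u₀ + 1 := by omega
        have htr2 : G.dist w t ≤ G.dist w v + G.dist v t := hc.dist_triangle
        have htA : t ∈ A := by
          simp only [hA, Finset.mem_filter, Finset.mem_univ, true_and]
          omega
        have := hmax t htA
        omega
    · intro h; rw [h]; exact hs₀adj
  refine ⟨u₀, ?_, hu₀⟩
  rw [IsLeaf, hnb, Set.ncard_singleton]
end Aux2


section Aux3
set_option linter.unusedSectionVars false
variable {V : Type*} [DecidableEq V] {G : SimpleGraph V}

lemma leaf_branch [Fintype V] (hT : G.IsTree) {w : V} (hw3 : 3 ≤ (G.neighborSet w).ncard)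
    {s : V} (hs : G.Adj w s) : ∃ l, IsLeaf G l ∧ Br G w l s := by
  have hc := hT.isConnected
  have hsw : s ≠ w := fun e => G.irrefl (e ▸ hs)
  have hds : G.dist w s = 1 := by
    have h1 := dist_adj_le hs
    have h2 : 0 < G.dist w s := hc.pos_dist_of_ne hs.ne
    omega
  have hBss : Br G w s s := ⟨hs, by rw [SimpleGraph.dist_self]; omega⟩
  obtain ⟨l, hl, hld⟩ := exists_leaf_on hT hw3 hsw
  have hlw : l ≠ w := by
    intro e
    rw [IsLeaf, e] at hl
    omega
  obtain ⟨sl, hsl⟩ := br_exists hc hlw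
  have hsls : sl = s := by
    by_contra hne
    have hd := br_ne_dist hT hsl hBss hne
    have hcm : G.dist l w = G.dist w l := SimpleGraph.dist_comm
    have hcm2 : G.dist l s = G.dist s l := SimpleGraph.dist_comm
    omega
  exact ⟨l, hl, hsls ▸ hsl⟩

lemma tree_three_leaves_resolve [Fintype V] (hT : G.IsTree) (hV : 4 ≤ Fintype.card V)
    (hl : numLeaves G = 3) :
    ∃ x y z : V, x ≠ y ∧ x ≠ z ∧ y ≠ z ∧ IsLeaf G x ∧ IsLeaf G y ∧ IsLeaf G z ∧
      (∀ u v : V, G.dist u x = G.dist v x → G.dist u y = G.dist v y → u = v) := by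
  classical
  have hc := hT.isConnected
  obtain ⟨w, hw3⟩ := exists_major_of_three_leaves hT hV hl
  obtain ⟨x, y, z, hxy, hxz, hyz, hLset⟩ := Set.ncard_eq_three.mp hl
  have hleaf : ∀ l : V, IsLeaf G l → l = x ∨ l = y ∨ l = z := by
    intro l hli
    have : l ∈ ({x, y, z} : Set V) := hLset ▸ hli
    simpa using this
  have hmemL : ∀ l : V, (l = x ∨ l = y ∨ l = z) → IsLeaf G l := by
    intro l hli
    have : l ∈ ({x, y, z} : Set V) := by simpa using hli
    rw [← hLset] at this
    exact this
  have hxL : IsLeaf G x := hmemL x (Or.inl rfl)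
  have hyL : IsLeaf G y := hmemL y (Or.inr (Or.inl rfl))
  have hzL : IsLeaf G z := hmemL z (Or.inr (Or.inr rfl))
  have hlw : ∀ l, IsLeaf G l → l ≠ w := by
    intro l hli e
    rw [IsLeaf, e] at hli
    omega
  obtain ⟨sx, hbx⟩ := br_exists hc (hlw x hxL)
  obtain ⟨sy, hby⟩ := br_exists hc (hlw y hyL)
  obtain ⟨sz, hbz⟩ := br_exists hc (hlw z hzL)
  have hsub : G.neighborSet w ⊆ {sx, sy, sz} := by
    intro s hs
    obtain ⟨l, hli, hbl⟩ := leaf_branch hT hw3 hs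
    rcases hleaf l hli with rfl | rfl | rfl
    · exact Or.inl (br_unique hT hbl hbx)
    · exact Or.inr (Or.inl (br_unique hT hbl hby))
    · exact Or.inr (Or.inr (br_unique hT hbl hbz))
  have hpair : ∀ a b : V, ({a, b} : Set V).ncard ≤ 2 := by
    intro a b
    have h1 := Set.ncard_insert_le a ({b} : Set V)
    simpa using h1
  have hbxy : sx ≠ sy := by
    rintro rfl
    have h1 : G.neighborSet w ⊆ {sx, sz} := by
      intro t ht
      have hm := hsub ht
      simp only [Set.mem_insert_iff, Set.mem_singleton_iff] at hm ⊢
      tauto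
    have h2 := Set.ncard_le_ncard h1 (Set.toFinite _)
    have := hpair sx sz
    omega
  have hbxz : sx ≠ sz := by
    rintro rfl
    have h1 : G.neighborSet w ⊆ {sx, sy} := by
      intro t ht
      have hm := hsub ht
      simp only [Set.mem_insert_iff, Set.mem_singleton_iff] at hm ⊢
      tauto
    have h2 := Set.ncard_le_ncard h1 (Set.toFinite _)
    have := hpair sx sy
    omega
  have hbyz : sy ≠ sz := by
    rintro rfl
    have h1 : G.neighborSet w ⊆ {sx, sy} := by
      intro t ht
      have hm := hsub ht
      simp only [Set.mem_insert_iff, Set.mem_singleton_iff] at hm ⊢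
      tauto
    have h2 := Set.ncard_le_ncard h1 (Set.toFinite _)
    have := hpair sx sy
    omega
  -- distinct leaves lie in distinct branches
  have hinj : ∀ (a sa b sb : V), (a = x ∨ a = y ∨ a = z) → (b = x ∨ b = y ∨ b = z) →
      Br G w a sa → Br G w b sb → a ≠ b → sa ≠ sb := by
    intro a sa b sb ha hb hBa hBb hab e
    rcases ha with rfl | rfl | rfl <;> rcases hb with rfl | rfl | rfl
    · exact hab rfl
    · exact hbxy (((br_unique hT hBa hbx).symm.trans e).trans (br_unique hT hBb hby))
    · exact hbxz (((br_unique hT hBa hbx).symm.trans e).trans (br_unique hT hBb hbz))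
    · exact hbxy (((br_unique hT hBb hbx).symm.trans e.symm).trans (br_unique hT hBa hby))
    · exact hab rfl
    · exact hbyz (((br_unique hT hBa hby).symm.trans e).trans (br_unique hT hBb hbz))
    · exact hbxz (((br_unique hT hBb hbx).symm.trans e.symm).trans (br_unique hT hBa hbz))
    · exact hbyz (((br_unique hT hBb hby).symm.trans e.symm).trans (br_unique hT hBa hbz))
    · exact hab rfl
  -- leg decomposition
  have honleg : ∀ v : V, ∃ l, (l = x ∨ l = y ∨ l = z) ∧
      (G.dist w v + G.dist v l = G.dist w l) ∧
      (∀ l', (l' = x ∨ l' = y ∨ l' = z) → l' ≠ l →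
        G.dist v l' = G.dist v w + G.dist w l') := by
    intro v
    by_cases hvw : v = w
    · subst hvw
      refine ⟨x, Or.inl rfl, by simp [SimpleGraph.dist_self], ?_⟩
      intro l' _ _
      simp [SimpleGraph.dist_self]
    · obtain ⟨sv, hsv⟩ := br_exists hc hvw
      obtain ⟨l, hli, hld⟩ := exists_leaf_on hT hw3 hvw
      have hlmem := hleaf l hli
      obtain ⟨sl, hsl⟩ := br_exists hc (hlw l hli)
      have hslv : sl = sv := by
        by_contra hne
        have hd := br_ne_dist hT hsl hsv hne
        have hcm : G.dist l w = G.dist w l := SimpleGraph.dist_comm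
        have hcm2 : G.dist l v = G.dist v l := SimpleGraph.dist_comm
        have hwv : 1 ≤ G.dist w v := hc.pos_dist_of_ne (Ne.symm hvw)
        omega
      refine ⟨l, hlmem, hld, ?_⟩
      intro l' hl'mem hne
      obtain ⟨sl', hsl'⟩ := br_exists hc (hlw l' (hmemL l' hl'mem))
      have hss : sl' ≠ sv := by
        rw [← hslv]
        exact hinj l' sl' l sl hl'mem hlmem hsl' hsl hne
      have hd := br_ne_dist hT hsl' hsv hss
      have hcm : G.dist l' w = G.dist w l' := SimpleGraph.dist_comm
      have hcm2 : G.dist l' v = G.dist v l' := SimpleGraph.dist_comm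
      have hcm3 : G.dist v w = G.dist w v := SimpleGraph.dist_comm
      omega
  refine ⟨x, y, z, hxy, hxz, hyz, hxL, hyL, hzL, ?_⟩
  intro u v h1 h2
  obtain ⟨lu, hluM, hlu1, hlu2⟩ := honleg u
  obtain ⟨lv, hlvM, hlv1, hlv2⟩ := honleg v
  have cu : G.dist u w = G.dist w u := SimpleGraph.dist_comm
  have cv : G.dist v w = G.dist w v := SimpleGraph.dist_comm
  by_cases hsame : lu = lv
  · rw [← hsame] at hlv1
    rcases hluM with h | h | h
    · have e1 := hlu2 y (Or.inr (Or.inl rfl)) (by rw [h]; exact Ne.symm hxy)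
      have e2 := hlv2 y (Or.inr (Or.inl rfl)) (by rw [← hsame, h]; exact Ne.symm hxy)
      exact collinear_eq hT hlu1 hlv1 (by omega)
    · have e1 := hlu2 x (Or.inl rfl) (by rw [h]; exact hxy)
      have e2 := hlv2 x (Or.inl rfl) (by rw [← hsame, h]; exact hxy)
      exact collinear_eq hT hlu1 hlv1 (by omega)
    · have e1 := hlu2 x (Or.inl rfl) (by rw [h]; exact hxz)
      have e2 := hlv2 x (Or.inl rfl) (by rw [← hsame, h]; exact hxz)
      exact collinear_eq hT hlu1 hlv1 (by omega)
  · have key : G.dist w u = 0 ∧ G.dist w v = 0 := by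
      rcases hluM with h | h | h <;> rcases hlvM with h' | h' | h'
      · exact absurd (h.trans h'.symm) hsame
      · have e0 : G.dist w u + G.dist u x = G.dist w x := h ▸ hlu1
        have e3 : G.dist v x = G.dist v w + G.dist w x :=
          hlv2 x (Or.inl rfl) (by rw [h']; exact hxy)
        constructor <;> omega
      · have e0 : G.dist w u + G.dist u x = G.dist w x := h ▸ hlu1
        have e3 : G.dist v x = G.dist v w + G.dist w x :=
          hlv2 x (Or.inl rfl) (by rw [h']; exact hxz)
        constructor <;> omega
      · have e0 : G.dist w u + G.dist u y = G.dist w y := h ▸ hlu1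
        have e3 : G.dist v y = G.dist v w + G.dist w y :=
          hlv2 y (Or.inr (Or.inl rfl)) (by rw [h']; exact Ne.symm hxy)
        constructor <;> omega
      · exact absurd (h.trans h'.symm) hsame
      · have e0 : G.dist w u + G.dist u y = G.dist w y := h ▸ hlu1
        have e3 : G.dist v y = G.dist v w + G.dist w y :=
          hlv2 y (Or.inr (Or.inl rfl)) (by rw [h']; exact hyz)
        constructor <;> omega
      · have e0 : G.dist w v + G.dist v x = G.dist w x := h' ▸ hlv1
        have e3 : G.dist u x = G.dist u w + G.dist w x :=
          hlu2 x (Or.inl rfl) (by rw [h]; exact hxz)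
        constructor <;> omega
      · have e0 : G.dist w v + G.dist v y = G.dist w y := h' ▸ hlv1
        have e3 : G.dist u y = G.dist u w + G.dist w y :=
          hlu2 y (Or.inr (Or.inl rfl)) (by rw [h]; exact hyz)
        constructor <;> omega
      · exact absurd (h.trans h'.symm) hsame
    have hu : w = u := hc.dist_eq_zero_iff.mp key.1
    have hv : w = v := hc.dist_eq_zero_iff.mp key.2
    exact hu ▸ hv ▸ rfl
end Aux3


section Aux4
set_option linter.unusedSectionVars false
variable {V : Type*} {G : SimpleGraph V}

lemma distSet_singleton (G : SimpleGraph V) (v x : V) : distSet G v {x} = G.dist v x := by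
  simp [distSet]

lemma distSet_eq_zero_of_mem {v : V} {P : Set V} (h : v ∈ P) : distSet G v P = 0 :=
  Nat.eq_zero_of_le_zero (Nat.sInf_le ⟨v, h, SimpleGraph.dist_self⟩)

lemma distSet_le {v p : V} {P : Set V} (h : p ∈ P) : distSet G v P ≤ G.dist v p :=
  Nat.sInf_le ⟨p, h, rfl⟩

lemma distSet_exists {v : V} {P : Set V} (h : P.Nonempty) :
    ∃ p ∈ P, distSet G v P = G.dist v p := by
  obtain ⟨p, hp, he⟩ := Nat.sInf_mem (h.image (G.dist v))
  exact ⟨p, hp, he.symm⟩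

lemma distSet_pos (hc : G.Connected) {v : V} {P : Set V} (hne : P.Nonempty)
    (h : v ∉ P) : 1 ≤ distSet G v P := by
  obtain ⟨p, hp, he⟩ := distSet_exists hne
  rw [he]
  exact hc.pos_dist_of_ne (fun e => h (by rwa [e]))

lemma distSet_le_dist_add (hc : G.Connected) {u v : V} {P : Set V} (hne : P.Nonempty) :
    distSet G u P ≤ G.dist u v + distSet G v P := by
  obtain ⟨p, hp, he⟩ := distSet_exists hne
  calc distSet G u P ≤ G.dist u p := distSet_le hp
    _ ≤ G.dist u v + G.dist v p := hc.dist_triangle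
    _ = G.dist u v + distSet G v P := by rw [he]

lemma no_resolving_two [Fintype V] [DecidableEq V] (hT : G.IsTree) (hV : 4 ≤ Fintype.card V)
    (hl : numLeaves G = 3) (c : V → Fin 2) : ¬ IsResolvingPartition G c := by
  classical
  rintro ⟨hsurj, hres⟩
  have hc := hT.isConnected
  obtain ⟨w, hw3⟩ := exists_major_of_three_leaves hT hV hl
  have hij : c w + 1 ≠ c w := by
    have : ∀ a : Fin 2, a + 1 ≠ a := by decide
    exact this (c w)
  have hcover : ∀ a : Fin 2, a = c w ∨ a = c w + 1 := by
    have : ∀ a b : Fin 2, a = b ∨ a = b + 1 := by decide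
    exact fun a => this a (c w)
  have hCjne : ({x : V | c x = c w + 1}).Nonempty := hsurj (c w + 1)
  have hresA : ∀ u v : V, c u = c w → c v = c w →
      distSet G u {x : V | c x = c w + 1} = distSet G v {x : V | c x = c w + 1} → u = v := by
    intro u v hu hv hB
    apply hres
    intro a
    rcases hcover a with rfl | rfl
    · rw [distSet_eq_zero_of_mem (G := G) (show u ∈ {x : V | c x = c w} from hu),
        distSet_eq_zero_of_mem (G := G) (show v ∈ {x : V | c x = c w} from hv)]
    · exact hB
  have hresB : ∀ u v : V, c u = c w + 1 → c v = c w + 1 →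
      distSet G u {x : V | c x = c w} = distSet G v {x : V | c x = c w} → u = v := by
    intro u v hu hv hB
    apply hres
    intro a
    rcases hcover a with rfl | rfl
    · exact hB
    · rw [distSet_eq_zero_of_mem (G := G) (show u ∈ {x : V | c x = c w + 1} from hu),
        distSet_eq_zero_of_mem (G := G) (show v ∈ {x : V | c x = c w + 1} from hv)]
  have hwCi : (w : V) ∈ {x : V | c x = c w} := rfl
  have hk1 : 1 ≤ distSet G w {x : V | c x = c w + 1} :=
    distSet_pos hc hCjne (fun h => hij (Eq.symm (show c w = c w + 1 from h)))
  set k := distSet G w {x : V | c x = c w + 1} with hk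
  -- facts about neighbours
  have hBfact : ∀ t, G.Adj w t → c t = c w + 1 →
      k = 1 ∧ distSet G t {x : V | c x = c w} = 1 := by
    intro t hadj ht
    have h1 : k ≤ G.dist w t := distSet_le ht
    have h2 := dist_adj_le hadj
    have h3 : distSet G t {x : V | c x = c w} ≤ G.dist t w := distSet_le hwCi
    have h4 := dist_adj_le hadj.symm
    have h5 : 1 ≤ distSet G t {x : V | c x = c w} := by
      refine distSet_pos hc ⟨w, hwCi⟩ (fun hmem => ?_)
      exact hij (ht.symm.trans (show c t = c w from hmem))
    omega
  have hAfact : ∀ t, G.Adj w t → c t = c w →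
      1 ≤ distSet G t {x : V | c x = c w + 1} ∧
      distSet G t {x : V | c x = c w + 1} ≤ k + 1 ∧
      k ≤ distSet G t {x : V | c x = c w + 1} + 1 ∧
      distSet G t {x : V | c x = c w + 1} ≠ k := by
    intro t hadj ht
    have h1 : 1 ≤ distSet G t {x : V | c x = c w + 1} := by
      refine distSet_pos hc hCjne (fun hmem => ?_)
      exact hij ((show c t = c w + 1 from hmem).symm.trans ht)
    have h2 : distSet G t {x : V | c x = c w + 1} ≤ G.dist t w + k :=
      distSet_le_dist_add hc hCjne
    have h3 : k ≤ G.dist w t + distSet G t {x : V | c x = c w + 1} :=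
      distSet_le_dist_add hc hCjne
    have h4 := dist_adj_le hadj
    have h5 := dist_adj_le hadj.symm
    have h6 : distSet G t {x : V | c x = c w + 1} ≠ k := by
      intro he
      exact hadj.ne (hresA t w ht rfl he).symm
    omega
  -- three distinct neighbours
  obtain ⟨N3, hsubN, hN3⟩ := Set.exists_subset_card_eq hw3
  obtain ⟨n₁, n₂, n₃, h12, h13, h23, hNeq⟩ := Set.ncard_eq_three.mp hN3
  have ha1 : G.Adj w n₁ := hsubN (by rw [hNeq]; exact Or.inl rfl)
  have ha2 : G.Adj w n₂ := hsubN (by rw [hNeq]; exact Or.inr (Or.inl rfl))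
  have ha3 : G.Adj w n₃ := hsubN (by rw [hNeq]; exact Or.inr (Or.inr rfl))
  by_cases hkk : k = 1
  · -- every A-neighbour has value 2, every B-neighbour value 1; pigeonhole
    have hA2 : ∀ t, G.Adj w t → c t = c w → distSet G t {x : V | c x = c w + 1} = 2 := by
      intro t hadj ht
      have := hAfact t hadj ht
      omega
    have pigeon : ∃ a b : V, a ≠ b ∧ G.Adj w a ∧ G.Adj w b ∧
        ((c a = c w ∧ c b = c w) ∨ (c a = c w + 1 ∧ c b = c w + 1)) := by
      rcases hcover (c n₁) with e1 | e1 <;> rcases hcover (c n₂) with e2 | e2 <;>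
        rcases hcover (c n₃) with e3 | e3
      · exact ⟨n₁, n₂, h12, ha1, ha2, Or.inl ⟨e1, e2⟩⟩
      · exact ⟨n₁, n₂, h12, ha1, ha2, Or.inl ⟨e1, e2⟩⟩
      · exact ⟨n₁, n₃, h13, ha1, ha3, Or.inl ⟨e1, e3⟩⟩
      · exact ⟨n₂, n₃, h23, ha2, ha3, Or.inr ⟨e2, e3⟩⟩
      · exact ⟨n₂, n₃, h23, ha2, ha3, Or.inl ⟨e2, e3⟩⟩
      · exact ⟨n₁, n₃, h13, ha1, ha3, Or.inr ⟨e1, e3⟩⟩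
      · exact ⟨n₁, n₂, h12, ha1, ha2, Or.inr ⟨e1, e2⟩⟩
      · exact ⟨n₁, n₂, h12, ha1, ha2, Or.inr ⟨e1, e2⟩⟩
    obtain ⟨a, b, hab, haa, hba, hcase⟩ := pigeon
    rcases hcase with ⟨ea, eb⟩ | ⟨ea, eb⟩
    · exact hab (hresA a b ea eb (by rw [hA2 a haa ea, hA2 b hba eb]))
    · have e1 := (hBfact a haa ea).2
      have e2 := (hBfact b hba eb).2
      exact hab (hresB a b ea eb (by rw [e1, e2]))
  · -- k ≥ 2 : all neighbours in class A with distinct values in {k-1, k+1}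
    have hallA : ∀ t, G.Adj w t → c t = c w := by
      intro t hadj
      rcases hcover (c t) with h | h
      · exact h
      · exact absurd (hBfact t hadj h).1 hkk
    have f1 := hAfact n₁ ha1 (hallA n₁ ha1)
    have f2 := hAfact n₂ ha2 (hallA n₂ ha2)
    have f3 := hAfact n₃ ha3 (hallA n₃ ha3)
    have d12 : distSet G n₁ {x : V | c x = c w + 1} ≠ distSet G n₂ {x : V | c x = c w + 1} :=
      fun he => h12 (hresA n₁ n₂ (hallA n₁ ha1) (hallA n₂ ha2) he)
    have d13 : distSet G n₁ {x : V | c x = c w + 1} ≠ distSet G n₃ {x : V | c x = c w + 1} :=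
      fun he => h13 (hresA n₁ n₃ (hallA n₁ ha1) (hallA n₃ ha3) he)
    have d23 : distSet G n₂ {x : V | c x = c w + 1} ≠ distSet G n₃ {x : V | c x = c w + 1} :=
      fun he => h23 (hresA n₂ n₃ (hallA n₂ ha2) (hallA n₃ ha3) he)
    omega
end Aux4


/-- A tree of order at least four with exactly three leaves has partition dimension three. -/
theorem partitionDim_eq_three_of_three_leaves {V : Type*} [Fintype V] (G : SimpleGraph V)
    (hT : G.IsTree) (hV : 4 ≤ Fintype.card V) (hl : numLeaves G = 3) :
    partitionDim G = 3 := by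
  classical
  have hc := hT.isConnected
  have hnonempty : Nonempty V := Fintype.card_pos_iff.mp (by omega)
  obtain ⟨x, y, z, hxy, hxz, hyz, hxL, hyL, hzL, hres⟩ := tree_three_leaves_resolve hT hV hl
  have h3 : 3 ∈ {t : ℕ | ∃ c : V → Fin t, IsResolvingPartition G c} := by
    refine ⟨fun v => if v = x then 0 else if v = y then 1 else 2, ?_, ?_⟩
    · intro a
      fin_cases a
      · exact ⟨x, by simp⟩
      · exact ⟨y, by simp [Ne.symm hxy]⟩
      · exact ⟨z, by simp [Ne.symm hxz, Ne.symm hyz]⟩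
    · intro u v h
      have h0 := h 0
      have h1 := h 1
      have e0 : {t : V | (if t = x then (0 : Fin 3) else if t = y then 1 else 2) = 0} = {x} := by
        ext t
        simp only [Set.mem_setOf_eq, Set.mem_singleton_iff]
        constructor
        · intro ht
          by_contra htx
          rw [if_neg htx] at ht
          split_ifs at ht <;> exact absurd ht (by decide)
        · rintro rfl
          simp
      have e1 : {t : V | (if t = x then (0 : Fin 3) else if t = y then 1 else 2) = 1} = {y} := by
        ext t
        simp only [Set.mem_setOf_eq, Set.mem_singleton_iff]
        constructor
        · intro ht
          by_cases hh1 : t = x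
          · rw [if_pos hh1] at ht; exact absurd ht (by decide)
          · rw [if_neg hh1] at ht
            by_cases hh2 : t = y
            · exact hh2
            · rw [if_neg hh2] at ht; exact absurd ht (by decide)
        · rintro rfl
          rw [if_neg (Ne.symm hxy), if_pos rfl]
      rw [e0, distSet_singleton, distSet_singleton] at h0
      rw [e1, distSet_singleton, distSet_singleton] at h1
      exact hres u v h0 h1
  have hlow : ∀ t ∈ {t : ℕ | ∃ c : V → Fin t, IsResolvingPartition G c}, 3 ≤ t := by
    rintro t ⟨c, hrc⟩
    by_contra hlt
    push_neg at hlt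
    interval_cases t
    · exact (c (Classical.arbitrary V)).elim0
    · obtain ⟨u, v, huv⟩ := Fintype.exists_pair_of_one_lt_card (by omega : 1 < Fintype.card V)
      apply huv
      apply hrc.2
      intro a
      have huniv : {x : V | c x = a} = Set.univ := by
        ext t
        simp [Subsingleton.elim (c t) a]
      rw [huniv, distSet_eq_zero_of_mem (Set.mem_univ u), distSet_eq_zero_of_mem (Set.mem_univ v)]
    · exact no_resolving_two hT hV hl c hrc
  exact le_antisymm (Nat.sInf_le h3) (le_csInf ⟨3, h3⟩ hlow)
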